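/- For every k ∈ {1,…,n} one has C(λ_k) = (A′(λ_k)/m) · Σ_{i=0}^{m−1} Σ_{j=1}^{n} (V_i)_{kj} · Q̃_{(i,j),(i−1,k)}, where Q̃_{(i,j),(i−1,k)} denotes the entry of Q̃ in row (i,j) and column (i−1,k) (indices in ℤ/mℤ). In particular, if |g| ≠ 0, then C(λ_k)/(|g|·A′(λ_k)) = (1/(m·|g|))·Σ_{i=0}^{m−1} Σ_{j=1}^{n} (V_i)_{kj}·Q̃_{(i,j),(i−1,k)}. -/

import Mathlib

open Matrix BigOperators

noncomputable section

/-- The block matrix `L̃` with diagonal blocks `Λ = diag(λ₁,…,λₙ)` at positions `(h, h+1)`: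
its entry in row `(h,j)` and column `(i,k)` is `λⱼ` if `k = j` and `i = h + 1` in `ℤ/mℤ`,
and `0` otherwise. -/
def Ltilde (m n : ℕ) (lam : Fin n → ℂ) :
    Matrix (ZMod m × Fin n) (ZMod m × Fin n) ℂ :=
  Matrix.of fun p q => if q.2 = p.2 ∧ q.1 = p.1 + 1 then lam p.2 else 0

/-- `|g| = g₀ + g₁ + ⋯ + g_{m-1}`. -/
def gAbs (m : ℕ) (g : ZMod m → ℂ) : ℂ :=
  ∑ s ∈ Finset.range m, g (s : ZMod m)

/-- `cᵢ = Σ_{r=0}^{i} g_r − Σ_{s=0}^{m−1} ((m−s)/m)·g_s`, the index `i` read modulo `m`. -/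
def cConst (m : ℕ) (g : ZMod m → ℂ) (i : ZMod m) : ℂ :=
  (∑ r ∈ Finset.range (i.val + 1), g (r : ZMod m)) -
    ∑ s ∈ Finset.range m, (((m : ℂ) - (s : ℂ)) / (m : ℂ)) * g (s : ZMod m)

/-- The spin matrix `Q̃` built from `V i = ṽᵢ·w̃ᵢ`: its entry in row `(h,j)` and column `(i,k)`
vanishes unless `h = i + 1` in `ℤ/mℤ`, in which case (taking the representative
`i ∈ {0,…,m−1}`) it equals
`φⱼ + (1/λⱼ)·(cᵢ + Σ_{r=0}^{i}(V_r)ⱼⱼ − Σ_{s=0}^{m−1}((m−s)/m)·(V_s)ⱼⱼ)` if `k = j`, and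
`−Σ_{h′=0}^{m−1}(V_{i−h′})ⱼₖ·λⱼ^{m−h′−1}·λₖ^{h′}/(λⱼ^m − λₖ^m)` if `k ≠ j`. -/
def QtildeS (m n : ℕ) (g : ZMod m → ℂ) (lam phi : Fin n → ℂ)
    (V : ZMod m → Matrix (Fin n) (Fin n) ℂ) :
    Matrix (ZMod m × Fin n) (ZMod m × Fin n) ℂ :=
  Matrix.of fun p q =>
    if p.1 = q.1 + 1 then
      if q.2 = p.2 then
        phi p.2 + (1 / lam p.2) *
          (cConst m g q.1 + (∑ r ∈ Finset.range (q.1.val + 1), (V (r : ZMod m)) p.2 p.2) -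
            ∑ s ∈ Finset.range m, (((m : ℂ) - (s : ℂ)) / (m : ℂ)) * (V (s : ZMod m)) p.2 p.2)
      else
        -∑ h' ∈ Finset.range m,
          (V (q.1 - (h' : ZMod m))) p.2 q.2 * lam p.2 ^ (m - h' - 1) * lam q.2 ^ h' /
            (lam p.2 ^ m - lam q.2 ^ m)
    else 0

/-- `A(z) = det(z·1 − L̃)`. -/
def Afun (m n : ℕ) [NeZero m] (lam : Fin n → ℂ) (z : ℂ) : ℂ :=
  (z • (1 : Matrix (ZMod m × Fin n) (ZMod m × Fin n) ℂ) - Ltilde m n lam).det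

/-- `D(z) = tr(Q̃ · adj(z·1 − L̃))` (spin case). -/
def DfunS (m n : ℕ) [NeZero m] (g : ZMod m → ℂ) (lam phi : Fin n → ℂ)
    (V : ZMod m → Matrix (Fin n) (Fin n) ℂ) (z : ℂ) : ℂ :=
  Matrix.trace (QtildeS m n g lam phi V *
    (z • (1 : Matrix (ZMod m × Fin n) (ZMod m × Fin n) ℂ) - Ltilde m n lam).adjugate)

/-- The block-diagonal matrix `B` with entry `(V_h)ⱼₖ` in row `(h,j)` and column `(h,k)`,
and `0` in positions with differing first indices. -/
def Bmat (m n : ℕ) (V : ZMod m → Matrix (Fin n) (Fin n) ℂ) :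
    Matrix (ZMod m × Fin n) (ZMod m × Fin n) ℂ :=
  Matrix.of fun p q => if p.1 = q.1 then (V p.1) p.2 q.2 else 0

/-- `C(z) = tr(Q̃ · adj(z·1 − L̃) · B)` (spin case). -/
def CfunS (m n : ℕ) [NeZero m] (g : ZMod m → ℂ) (lam phi : Fin n → ℂ)
    (V : ZMod m → Matrix (Fin n) (Fin n) ℂ) (z : ℂ) : ℂ :=
  Matrix.trace (QtildeS m n g lam phi V *
    (z • (1 : Matrix (ZMod m × Fin n) (ZMod m × Fin n) ℂ) - Ltilde m n lam).adjugate *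
    Bmat m n V)


namespace SpinAux

/-- cyclic shift matrix on `ZMod m` -/
def S (m : ℕ) : Matrix (ZMod m) (ZMod m) ℂ :=
  Matrix.of fun h i => if i = h + 1 then 1 else 0

lemma S_pow (m : ℕ) [NeZero m] (t : ℕ) :
    S m ^ t = Matrix.of fun h i => if i = h + (t : ZMod m) then 1 else 0 := by
  induction t with
  | zero =>
    ext h i
    simp [Matrix.one_apply, eq_comm]
  | succ t ih =>
    ext h i
    rw [pow_succ, ih]
    simp only [Matrix.mul_apply, Matrix.of_apply, S, ite_mul, one_mul, zero_mul]
    rw [Finset.sum_ite_eq' Finset.univ (h + (t : ZMod m))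
      (fun q => if i = q + 1 then (1:ℂ) else 0)]
    simp [add_assoc]

lemma S_pow_card (m : ℕ) [NeZero m] : S m ^ m = 1 := by
  rw [S_pow]
  ext h i
  simp [Matrix.one_apply, ZMod.natCast_self, eq_comm]

lemma sum_S_pow (m : ℕ) [NeZero m] :
    ∑ t ∈ Finset.range m, S m ^ t = Matrix.of fun _ _ => (1:ℂ) := by
  ext h i
  rw [Matrix.sum_apply]
  simp only [S_pow, Matrix.of_apply]
  rw [Finset.sum_eq_single_of_mem ((i - h).val)
      (Finset.mem_range.mpr (ZMod.val_lt _))]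
  · rw [if_pos (by rw [ZMod.natCast_rightInverse (i - h)]; ring)]
  · intro t ht' ht
    rw [if_neg]
    intro hcon
    apply ht
    have h2 : ((t : ℕ) : ZMod m) = i - h := by rw [hcon]; ring
    rw [← h2, ZMod.val_natCast, Nat.mod_eq_of_lt (Finset.mem_range.mp ht')]

lemma det_shift (m : ℕ) [NeZero m] (lam z : ℂ) :
    (z • (1 : Matrix (ZMod m) (ZMod m) ℂ) - lam • S m).det = z ^ m - lam ^ m := by
  rcases eq_or_lt_of_le (Nat.one_le_iff_ne_zero.mpr (NeZero.ne m)) with h1 | h2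
  · -- m = 1
    haveI : Unique (ZMod 1) := inferInstanceAs (Unique (Fin 1))
    subst h1
    rw [Matrix.det_unique]
    have hS : S 1 = (1 : Matrix (ZMod 1) (ZMod 1) ℂ) := by
      ext h i
      rw [S, Matrix.of_apply, Matrix.one_apply, if_pos (Subsingleton.elim _ _),
        if_pos (Subsingleton.elim _ _)]
    rw [hS, Matrix.sub_apply, Matrix.smul_apply, Matrix.smul_apply, Matrix.one_apply_eq,
      smul_eq_mul, smul_eq_mul]
    ring
  · -- 2 ≤ m
    haveI : Fact (1 < m) := ⟨h2⟩
    have hone : (1 : ZMod m) ≠ 0 := one_ne_zero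
    set A := z • (1 : Matrix (ZMod m) (ZMod m) ℂ) - lam • S m with hA
    have hAapp : ∀ h i : ZMod m,
        A h i = (if h = i then z else 0) - (if i = h + 1 then lam else 0) := by
      intro h i
      simp [hA, S, Matrix.one_apply, mul_ite, mul_one, mul_zero]
    set c : Equiv.Perm (ZMod m) := Equiv.addRight (-1 : ZMod m) with hc
    have hcapp : ∀ i, c i = i - 1 := fun i => by simp [hc, sub_eq_add_neg]
    have hcinvapp : ∀ i, c⁻¹ i = i + 1 := by
      intro i
      simp [hc]
    have h1c : (1 : Equiv.Perm (ZMod m)) ≠ c := by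
      intro h
      rw [Equiv.ext_iff] at h
      have h0 := h 0
      rw [hcapp 0] at h0
      simp only [Equiv.Perm.coe_one, id_eq] at h0
      exact hone (by linear_combination h0)
    have key : ∀ σ : Equiv.Perm (ZMod m), σ ≠ 1 → σ ≠ c → ∏ i, A (σ i) i = 0 := by
      intro σ hσ1 hσc
      by_contra hprod
      have hne : ∀ i, A (σ i) i ≠ 0 := by
        intro i hi
        exact hprod (Finset.prod_eq_zero (Finset.mem_univ i) hi)
      have hstep : ∀ i, σ i = i ∨ σ i = i - 1 := by
        intro i
        by_contra hcon
        push_neg at hcon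
        apply hne i
        rw [hAapp, if_neg (fun h : σ i = i => hcon.1 h),
          if_neg (fun h : i = σ i + 1 => hcon.2 (eq_sub_of_add_eq h.symm)), sub_zero]
      obtain ⟨i0, hi0⟩ : ∃ i, σ i ≠ i := by
        by_contra hall
        push_neg at hall
        exact hσ1 (Equiv.ext hall)
      have hi0' : σ i0 = i0 - 1 := (hstep i0).resolve_left hi0
      have hTstep : ∀ i, σ i = i - 1 → σ (i - 1) = i - 1 - 1 := by
        intro i hi
        rcases hstep (i - 1) with h | h
        · exfalso
          have h2' : σ (i - 1) = σ i := by rw [h, hi]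
          have h3 : i - 1 = i := σ.injective h2'
          exact hone (by linear_combination -h3)
        · exact h
      have hall : ∀ t : ℕ, σ (i0 - t) = i0 - t - 1 := by
        intro t
        induction t with
        | zero => simpa using hi0'
        | succ t ih =>
          have h4 := hTstep _ ih
          have h5 : (i0 - (t + 1 : ℕ) : ZMod m) = i0 - t - 1 := by push_cast; ring
          rw [h5]
          exact h4
      apply hσc
      ext i
      have h6 := hall ((i0 - i).val)
      rw [ZMod.natCast_rightInverse (i0 - i)] at h6
      have h7 : i0 - (i0 - i) = i := by ring
      rw [h7] at h6
      rw [h6, hcapp]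
    rw [Matrix.det_apply]
    rw [← Finset.sum_subset (Finset.subset_univ ({1, c} : Finset (Equiv.Perm (ZMod m))))
      (fun σ _ hσ => by
        simp only [Finset.mem_insert, Finset.mem_singleton, not_or] at hσ
        rw [key σ hσ.1 hσ.2, smul_zero])]
    rw [Finset.sum_pair h1c]
    have e1 : (Equiv.Perm.sign (1 : Equiv.Perm (ZMod m))) • ∏ i, A ((1 : Equiv.Perm (ZMod m)) i) i
        = z ^ m := by
      have h8 : ∀ i : ZMod m, A i i = z := by
        intro i
        rw [hAapp, if_pos rfl, if_neg (fun h : i = i + 1 => hone (by linear_combination -h)),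
          sub_zero]
      simp [h8, Finset.prod_const, ZMod.card]
    have e2 : (Equiv.Perm.sign c) • ∏ i, A (c i) i = -(lam ^ m) := by
      have hprodc : ∏ i, A (c i) i = (-1) ^ m * lam ^ m := by
        have h9 : ∀ i : ZMod m, A (c i) i = -lam := by
          intro i
          rw [hcapp, hAapp, if_neg (fun h : i - 1 = i => hone (by linear_combination -h)),
            if_pos (by ring), zero_sub]
        rw [Finset.prod_congr rfl (fun i _ => h9 i), Finset.prod_const, Finset.card_univ,
          ZMod.card, neg_pow]
      have hcycle : c.IsCycle := by
        refine ⟨0, ?_, ?_⟩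
        · rw [hcapp]
          intro h
          exact hone (by linear_combination -h)
        · intro y _
          refine ⟨-(ZMod.val y : ℤ), ?_⟩
          rw [_root_.zpow_neg, ← _root_.inv_zpow, zpow_natCast]
          have hpow : ∀ t : ℕ, ((c⁻¹) ^ t) 0 = (t : ZMod m) := by
            intro t
            induction t with
            | zero => simp
            | succ t ih =>
              rw [pow_succ', Equiv.Perm.mul_apply, ih, hcinvapp]
              push_cast
              ring
          rw [hpow]
          exact ZMod.natCast_rightInverse y
      have hsupp : c.support = Finset.univ := by
        apply Finset.eq_univ_iff_forall.mpr
        intro i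
        rw [Equiv.Perm.mem_support, hcapp]
        intro h
        exact hone (by linear_combination -h)
      have hsign : Equiv.Perm.sign c = -(-1 : ℤˣ) ^ m := by
        rw [hcycle.sign, hsupp]
        congr 1
        simp [ZMod.card]
      have hcast : ((Equiv.Perm.sign c : ℤ) : ℂ) = -(-1 : ℂ) ^ m := by
        rw [hsign]
        push_cast
        ring
      rw [Units.smul_def, zsmul_eq_mul, hcast, hprodc]
      have h10 : (-1 : ℂ) ^ m * (-1 : ℂ) ^ m = 1 := by
        rw [← pow_add]
        exact Even.neg_one_pow ⟨m, rfl⟩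
      calc -(-1 : ℂ) ^ m * ((-1) ^ m * lam ^ m)
          = -((-1 : ℂ) ^ m * (-1) ^ m * lam ^ m) := by ring
        _ = -(lam ^ m) := by rw [h10, one_mul]
    rw [e1, e2]
    ring

/-- the explicit block inverse numerator -/
def Nb (m : ℕ) [NeZero m] (lam z : ℂ) : Matrix (ZMod m) (ZMod m) ℂ :=
  ∑ t ∈ Finset.range m, (z ^ (m - 1 - t) * lam ^ t) • S m ^ t

lemma shift_mul_Nb (m : ℕ) [NeZero m] (lam z : ℂ) :
    (z • 1 - lam • S m) * Nb m lam z = (z ^ m - lam ^ m) • 1 := by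
  have key : (z • (1 : Matrix (ZMod m) (ZMod m) ℂ) - lam • S m) * Nb m lam z
      = ∑ t ∈ Finset.range m,
        ((z ^ (m - t) * lam ^ t) • S m ^ t - (z ^ (m - (t+1)) * lam ^ (t+1)) • S m ^ (t+1)) := by
    rw [Nb, Finset.mul_sum]
    refine Finset.sum_congr rfl fun t ht => ?_
    rw [Finset.mem_range] at ht
    rw [sub_mul]
    congr 1
    · rw [smul_mul_smul_comm, one_mul]
      congr 1
      rw [show m - t = (m - 1 - t) + 1 by omega, pow_succ']
      ring
    · rw [smul_mul_smul_comm, ← pow_succ']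
      congr 1
      rw [show m - (t + 1) = m - 1 - t by omega, pow_succ']
      ring
  rw [key, Finset.sum_range_sub' (fun t => (z ^ (m - t) * lam ^ t) • S m ^ t) m]
  simp only [Nat.sub_zero, Nat.sub_self, pow_zero, mul_one, one_mul, S_pow_card]
  rw [sub_smul]

lemma commute_shift_Nb (m : ℕ) [NeZero m] (lam z : ℂ) :
    Commute (z • (1 : Matrix (ZMod m) (ZMod m) ℂ) - lam • S m) (Nb m lam z) := by
  apply Commute.sum_right
  intro t _
  apply Commute.smul_right
  apply Commute.sub_left
  · exact (Commute.one_left _).smul_left z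
  · exact ((Commute.refl (S m)).pow_right t).smul_left lam

lemma Nb_mul_shift (m : ℕ) [NeZero m] (lam z : ℂ) :
    Nb m lam z * (z • 1 - lam • S m) = (z ^ m - lam ^ m) • 1 := by
  rw [← commute_shift_Nb m lam z, shift_mul_Nb]

/-- the global numerator matrix: adjugate of `z•1 - L̃` -/
def Nbig (m n : ℕ) [NeZero m] (lam : Fin n → ℂ) (z : ℂ) :
    Matrix (ZMod m × Fin n) (ZMod m × Fin n) ℂ :=
  Matrix.blockDiagonal fun j =>
    (∏ l ∈ Finset.univ.erase j, (z ^ m - lam l ^ m)) • Nb m (lam j) z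

lemma M_eq (m n : ℕ) [NeZero m] (lam : Fin n → ℂ) (z : ℂ) :
    z • (1 : Matrix (ZMod m × Fin n) (ZMod m × Fin n) ℂ) - Ltilde m n lam
      = Matrix.blockDiagonal (fun j => z • 1 - lam j • S m) := by
  ext ⟨h, j⟩ ⟨i, k⟩
  rw [Matrix.sub_apply, Matrix.smul_apply, Matrix.one_apply, Matrix.blockDiagonal_apply]
  by_cases hjk : j = k
  · subst hjk
    rw [if_pos rfl, Matrix.sub_apply, Matrix.smul_apply, Matrix.smul_apply, Matrix.one_apply,
      Ltilde, Matrix.of_apply, S, Matrix.of_apply]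
    simp only [Prod.mk.injEq, and_true, true_and]
    congr 1
    by_cases hk : i = h + 1
    · rw [if_pos hk, if_pos hk, smul_eq_mul, mul_one]
    · rw [if_neg hk, if_neg hk, smul_zero]
  · rw [if_neg hjk, if_neg (fun hp : (h, j) = (i, k) => hjk (Prod.ext_iff.mp hp).2),
      Ltilde, Matrix.of_apply, if_neg (fun hp : k = j ∧ _ => hjk hp.1.symm),
      smul_zero, sub_zero]

lemma M_mul_Nbig (m n : ℕ) [NeZero m] (lam : Fin n → ℂ) (z : ℂ) :
    (z • 1 - Ltilde m n lam) * Nbig m n lam z = (∏ j, (z ^ m - lam j ^ m)) • 1 := by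
  rw [M_eq, Nbig, ← Matrix.blockDiagonal_mul]
  have h1 : ∀ j : Fin n, (z • 1 - lam j • S m)
      * ((∏ l ∈ Finset.univ.erase j, (z ^ m - lam l ^ m)) • Nb m (lam j) z)
      = (∏ l, (z ^ m - lam l ^ m)) • (1 : Matrix (ZMod m) (ZMod m) ℂ) := by
    intro j
    rw [Matrix.mul_smul, shift_mul_Nb, smul_smul, Finset.prod_erase_mul _ _ (Finset.mem_univ j)]
  rw [show (fun j => (z • 1 - lam j • S m)
      * ((∏ l ∈ Finset.univ.erase j, (z ^ m - lam l ^ m)) • Nb m (lam j) z))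
      = fun _ => (∏ l, (z ^ m - lam l ^ m)) • (1 : Matrix (ZMod m) (ZMod m) ℂ) from
    funext h1]
  rw [show (fun _ : Fin n => (∏ l, (z ^ m - lam l ^ m)) • (1 : Matrix (ZMod m) (ZMod m) ℂ))
      = (∏ l, (z ^ m - lam l ^ m)) • (1 : Fin n → Matrix (ZMod m) (ZMod m) ℂ) from rfl]
  rw [Matrix.blockDiagonal_smul, Matrix.blockDiagonal_one]

lemma Nbig_mul_M (m n : ℕ) [NeZero m] (lam : Fin n → ℂ) (z : ℂ) :
    Nbig m n lam z * (z • 1 - Ltilde m n lam) = (∏ j, (z ^ m - lam j ^ m)) • 1 := by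
  rw [M_eq, Nbig, ← Matrix.blockDiagonal_mul]
  have h1 : ∀ j : Fin n,
      ((∏ l ∈ Finset.univ.erase j, (z ^ m - lam l ^ m)) • Nb m (lam j) z)
      * (z • 1 - lam j • S m)
      = (∏ l, (z ^ m - lam l ^ m)) • (1 : Matrix (ZMod m) (ZMod m) ℂ) := by
    intro j
    rw [Matrix.smul_mul, Nb_mul_shift, smul_smul, Finset.prod_erase_mul _ _ (Finset.mem_univ j)]
  rw [show (fun j => ((∏ l ∈ Finset.univ.erase j, (z ^ m - lam l ^ m)) • Nb m (lam j) z)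
      * (z • 1 - lam j • S m))
      = fun _ => (∏ l, (z ^ m - lam l ^ m)) • (1 : Matrix (ZMod m) (ZMod m) ℂ) from
    funext h1]
  rw [show (fun _ : Fin n => (∏ l, (z ^ m - lam l ^ m)) • (1 : Matrix (ZMod m) (ZMod m) ℂ))
      = (∏ l, (z ^ m - lam l ^ m)) • (1 : Fin n → Matrix (ZMod m) (ZMod m) ℂ) from rfl]
  rw [Matrix.blockDiagonal_smul, Matrix.blockDiagonal_one]

lemma det_M (m n : ℕ) [NeZero m] (lam : Fin n → ℂ) (z : ℂ) :
    (z • (1 : Matrix (ZMod m × Fin n) (ZMod m × Fin n) ℂ) - Ltilde m n lam).det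
      = ∏ j, (z ^ m - lam j ^ m) := by
  rw [M_eq, Matrix.det_blockDiagonal]
  exact Finset.prod_congr rfl fun j _ => det_shift m (lam j) z

lemma adj_eq_of_ne (m n : ℕ) [NeZero m] (lam : Fin n → ℂ) (z : ℂ)
    (hz : (∏ j, (z ^ m - lam j ^ m)) ≠ 0) :
    (z • (1 : Matrix (ZMod m × Fin n) (ZMod m × Fin n) ℂ) - Ltilde m n lam).adjugate
      = Nbig m n lam z := by
  set M := z • (1 : Matrix (ZMod m × Fin n) (ZMod m × Fin n) ℂ) - Ltilde m n lam with hM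
  have hdet : M.det = ∏ j, (z ^ m - lam j ^ m) := det_M m n lam z
  haveI : Invertible M := Matrix.invertibleOfIsUnitDet M (by rw [hdet]; exact hz.isUnit)
  have h1 : M * M.adjugate = M * Nbig m n lam z := by
    rw [Matrix.mul_adjugate, hdet, M_mul_Nbig]
  calc M.adjugate = ⅟M * (M * M.adjugate) := by rw [← Matrix.mul_assoc, invOf_mul_self, Matrix.one_mul]
    _ = ⅟M * (M * Nbig m n lam z) := by rw [h1]
    _ = Nbig m n lam z := by rw [← Matrix.mul_assoc, invOf_mul_self, Matrix.one_mul]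

lemma adj_eq (m n : ℕ) [NeZero m] (lam : Fin n → ℂ) (z : ℂ) :
    (z • (1 : Matrix (ZMod m × Fin n) (ZMod m × Fin n) ℂ) - Ltilde m n lam).adjugate
      = Nbig m n lam z := by
  have hm : m ≠ 0 := NeZero.ne m
  set p : Polynomial ℂ := ∏ j, ((Polynomial.X : Polynomial ℂ) ^ m - Polynomial.C (lam j ^ m))
    with hp
  have hpne : p ≠ 0 := by
    have hmonic : p.Monic := Polynomial.monic_prod_of_monic _ _
      (fun j _ => Polynomial.monic_X_pow_sub_C _ hm)
    exact hmonic.ne_zero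
  have hec : ∀ w : ℂ, Polynomial.eval w p = ∏ j, (w ^ m - lam j ^ m) := by
    intro w
    rw [hp, Polynomial.eval_prod]
    exact Finset.prod_congr rfl fun j _ => by
      rw [Polynomial.eval_sub, Polynomial.eval_pow, Polynomial.eval_X, Polynomial.eval_C]
  have hfin : ({w : ℂ | Polynomial.IsRoot p w}).Finite := Polynomial.finite_setOf_isRoot hpne
  have hdense : Dense ({w : ℂ | Polynomial.IsRoot p w}ᶜ) := hfin.countable.dense_compl ℂ
  have hc1 : Continuous fun w : ℂ =>
      (w • (1 : Matrix (ZMod m × Fin n) (ZMod m × Fin n) ℂ) - Ltilde m n lam).adjugate := by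
    apply Continuous.matrix_adjugate
    apply continuous_matrix
    intro i j
    simp only [Matrix.sub_apply, Matrix.smul_apply, smul_eq_mul]
    exact (continuous_id.mul continuous_const).sub continuous_const
  have hc2 : Continuous fun w : ℂ => Nbig m n lam w := by
    apply Continuous.matrix_blockDiagonal
    apply continuous_pi
    intro j
    apply Continuous.fun_smul
    · apply continuous_finset_prod
      intro l _
      exact (continuous_pow m).sub continuous_const
    · apply continuous_finset_sum
      intro t _
      apply Continuous.fun_smul _ continuous_const
      exact ((continuous_pow _).mul continuous_const)
  have heq : (fun w : ℂ =>
      (w • (1 : Matrix (ZMod m × Fin n) (ZMod m × Fin n) ℂ) - Ltilde m n lam).adjugate)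
      = fun w : ℂ => Nbig m n lam w := by
    apply hc1.ext_on hdense hc2
    intro w hw
    apply adj_eq_of_ne
    rw [← hec]
    exact hw
  exact congrFun heq z

/-- rank-one projector shape -/
def Ek (m n : ℕ) (k : Fin n) : Matrix (ZMod m × Fin n) (ZMod m × Fin n) ℂ :=
  Matrix.of fun p q => (if p.2 = k then 1 else 0) * (if q.2 = k then 1 else 0)

lemma Nb_diag (m : ℕ) [NeZero m] (lam0 : ℂ) :
    Nb m lam0 lam0 = lam0 ^ (m - 1) • Matrix.of (fun _ _ : ZMod m => (1 : ℂ)) := by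
  rw [Nb]
  have h1 : ∀ t ∈ Finset.range m,
      (lam0 ^ (m - 1 - t) * lam0 ^ t) • S m ^ t = lam0 ^ (m - 1) • S m ^ t := by
    intro t ht
    rw [Finset.mem_range] at ht
    rw [← pow_add, show m - 1 - t + t = m - 1 by omega]
  rw [Finset.sum_congr rfl h1, ← Finset.smul_sum, sum_S_pow]

lemma Nbig_at_eigen (m n : ℕ) [NeZero m] (lam : Fin n → ℂ) (k : Fin n) :
    Nbig m n lam (lam k)
      = (lam k ^ (m - 1) * ∏ l ∈ Finset.univ.erase k, (lam k ^ m - lam l ^ m)) • Ek m n k := by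
  ext ⟨h, j⟩ ⟨i, l⟩
  rw [Nbig, Matrix.blockDiagonal_apply]
  simp only [Ek, Matrix.smul_apply, Matrix.of_apply, smul_eq_mul]
  by_cases hjl : j = l
  · subst hjl
    rw [if_pos rfl]
    by_cases hjk : j = k
    · subst hjk
      rw [Nb_diag, Matrix.smul_apply, Matrix.of_apply, smul_eq_mul]
      simp only [if_true]
      ring
    · rw [Finset.prod_eq_zero (Finset.mem_erase.mpr ⟨Ne.symm hjk, Finset.mem_univ k⟩)
        (sub_self (lam k ^ m)), zero_mul, if_neg hjk, zero_mul, mul_zero]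
  · rw [if_neg hjl]
    by_cases hjk : j = k
    · rw [if_neg (fun hlk : l = k => hjl (hjk.trans hlk.symm)), mul_zero, mul_zero]
    · rw [if_neg hjk, zero_mul, mul_zero]

lemma deriv_Afun (m n : ℕ) [NeZero m] (lam : Fin n → ℂ) (k : Fin n) :
    deriv (Afun m n lam) (lam k)
      = (m : ℂ) * (lam k ^ (m - 1) * ∏ l ∈ Finset.univ.erase k, (lam k ^ m - lam l ^ m)) := by
  have hA : Afun m n lam = fun z => ∏ j, (z ^ m - lam j ^ m) :=
    funext fun z => det_M m n lam z
  rw [hA]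
  have hd : HasDerivAt (fun z : ℂ => ∏ j, (z ^ m - lam j ^ m))
      (∑ j : Fin n, (∏ l ∈ Finset.univ.erase j, (lam k ^ m - lam l ^ m))
        • ((m : ℂ) * lam k ^ (m - 1))) (lam k) := by
    apply HasDerivAt.fun_finsetProd (f := fun (j : Fin n) (z : ℂ) => z ^ m - lam j ^ m)
      (f' := fun _ => (m : ℂ) * lam k ^ (m - 1))
    intro j _
    simpa using (hasDerivAt_pow m (lam k)).sub_const (lam j ^ m)
  rw [hd.deriv]
  rw [Finset.sum_eq_single_of_mem k (Finset.mem_univ k)]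
  · rw [smul_eq_mul]
    ring
  · intro j _ hj
    rw [Finset.prod_eq_zero (Finset.mem_erase.mpr ⟨Ne.symm hj, Finset.mem_univ k⟩)
      (sub_self (lam k ^ m)), zero_smul]

lemma trace_QEB (m n : ℕ) [NeZero m] (g : ZMod m → ℂ) (lam phi : Fin n → ℂ)
    (V : ZMod m → Matrix (Fin n) (Fin n) ℂ) (k : Fin n) :
    Matrix.trace (QtildeS m n g lam phi V * Ek m n k * Bmat m n V)
      = ∑ i : ZMod m, ∑ j : Fin n,
          (V i) k j * QtildeS m n g lam phi V (i, j) (i - 1, k) := by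
  have hEB : ∀ q p : ZMod m × Fin n, (Ek m n k * Bmat m n V) q p
      = if q.2 = k then (V p.1) k p.2 else 0 := by
    intro q p
    rw [Matrix.mul_apply, Fintype.sum_prod_type]
    simp only [Ek, Bmat, Matrix.of_apply]
    simp [mul_ite, ite_mul, mul_zero, zero_mul, Finset.sum_ite_eq, Finset.sum_ite_eq',
      Finset.mem_univ]
  rw [Matrix.mul_assoc, Matrix.trace]
  have hdiag : ∀ p : ZMod m × Fin n,
      (QtildeS m n g lam phi V * (Ek m n k * Bmat m n V)).diag p
        = ∑ q : ZMod m × Fin n, QtildeS m n g lam phi V p q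
            * (if q.2 = k then (V p.1) k p.2 else 0) := by
    intro p
    rw [Matrix.diag_apply, Matrix.mul_apply]
    exact Finset.sum_congr rfl fun q _ => by rw [hEB]
  rw [Finset.sum_congr rfl fun p _ => hdiag p, Fintype.sum_prod_type]
  refine Finset.sum_congr rfl fun i _ => ?_
  refine Finset.sum_congr rfl fun j _ => ?_
  rw [Fintype.sum_prod_type]
  have hinner : ∀ a : ZMod m,
      ∑ b : Fin n, QtildeS m n g lam phi V (i, j) (a, b)
          * (if (a, b).2 = k then (V (i, j).1) k (i, j).2 else 0)
        = QtildeS m n g lam phi V (i, j) (a, k) * (V i) k j := by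
    intro a
    rw [Finset.sum_eq_single_of_mem k (Finset.mem_univ k)]
    · rw [if_pos rfl]
    · intro b _ hb
      rw [if_neg hb, mul_zero]
  rw [Finset.sum_congr rfl fun a _ => hinner a]
  rw [Finset.sum_eq_single_of_mem (i - 1) (Finset.mem_univ (i - 1))]
  · rw [mul_comm]
  · intro a _ ha
    have hz : QtildeS m n g lam phi V (i, j) (a, k) = 0 := by
      rw [QtildeS, Matrix.of_apply, if_neg]
      intro he
      exact ha (eq_sub_of_add_eq he.symm)
    rw [hz, zero_mul]

end SpinAux

/-- Spin case: for every `k`,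
`C(λₖ) = (A′(λₖ)/m) · Σ_{i=0}^{m−1} Σ_{j} (V_i)_{kj} · Q̃_{(i,j),(i−1,k)}`; in particular,
if `|g| ≠ 0`, then
`C(λₖ)/(|g|·A′(λₖ)) = (1/(m·|g|))·Σ_{i=0}^{m−1} Σ_{j} (V_i)_{kj}·Q̃_{(i,j),(i−1,k)}`. -/
theorem spin_Cfun_at_eigenvalue (m n d : ℕ) [NeZero m] (hn : 0 < n) (hd : 0 < d)
    (lam phi : Fin n → ℂ) (g : ZMod m → ℂ)
    (hlam : ∀ j, lam j ≠ 0)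
    (hsep : ∀ j k : Fin n, j ≠ k → lam j ^ m ≠ lam k ^ m)
    (vt : ZMod m → Matrix (Fin n) (Fin d) ℂ) (wt : ZMod m → Matrix (Fin d) (Fin n) ℂ)
    (hV : ∀ j : Fin n, ∑ i : ZMod m, (vt i * wt i) j j = gAbs m g) (k : Fin n) :
    CfunS m n g lam phi (fun i => vt i * wt i) (lam k) =
      deriv (Afun m n lam) (lam k) / (m : ℂ) *
        ∑ i : ZMod m, ∑ j : Fin n,
          (vt i * wt i) k j *
            QtildeS m n g lam phi (fun i' => vt i' * wt i') (i, j) (i - 1, k) ∧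
    (gAbs m g ≠ 0 →
      CfunS m n g lam phi (fun i => vt i * wt i) (lam k) /
          (gAbs m g * deriv (Afun m n lam) (lam k)) =
        (1 / ((m : ℂ) * gAbs m g)) *
          ∑ i : ZMod m, ∑ j : Fin n,
            (vt i * wt i) k j *
              QtildeS m n g lam phi (fun i' => vt i' * wt i') (i, j) (i - 1, k)) := by
  
  have hm0 : (m : ℂ) ≠ 0 := Nat.cast_ne_zero.mpr (NeZero.ne m)
  have hadj : ((lam k) • (1 : Matrix (ZMod m × Fin n) (ZMod m × Fin n) ℂ)
      - Ltilde m n lam).adjugate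
      = (lam k ^ (m - 1) * ∏ l ∈ Finset.univ.erase k, (lam k ^ m - lam l ^ m))
        • SpinAux.Ek m n k := by
    rw [SpinAux.adj_eq, SpinAux.Nbig_at_eigen]
  have hC : CfunS m n g lam phi (fun i => vt i * wt i) (lam k)
      = (lam k ^ (m - 1) * ∏ l ∈ Finset.univ.erase k, (lam k ^ m - lam l ^ m))
        * ∑ i : ZMod m, ∑ j : Fin n,
            (vt i * wt i) k j
              * QtildeS m n g lam phi (fun i' => vt i' * wt i') (i, j) (i - 1, k) := by
    rw [CfunS, hadj, Matrix.mul_smul, Matrix.smul_mul, Matrix.trace_smul, smul_eq_mul,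
      SpinAux.trace_QEB m n g lam phi (fun i => vt i * wt i) k]
  have hA' : deriv (Afun m n lam) (lam k)
      = (m : ℂ) * (lam k ^ (m - 1) * ∏ l ∈ Finset.univ.erase k, (lam k ^ m - lam l ^ m)) :=
    SpinAux.deriv_Afun m n lam k
  constructor
  · rw [hC, hA']
    field_simp
  · intro hg
    have hc0 : (lam k ^ (m - 1) * ∏ l ∈ Finset.univ.erase k, (lam k ^ m - lam l ^ m)) ≠ 0 := by
      apply mul_ne_zero (pow_ne_zero _ (hlam k))
      rw [Finset.prod_ne_zero_iff]
      intro l hl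
      exact sub_ne_zero.mpr (hsep k l (Ne.symm (Finset.mem_erase.mp hl).1))
    have hlk := hlam k
    have hP := right_ne_zero_of_mul hc0
    rw [hC, hA']
    field_simp
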